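/- Projection of a forbidden interval when the low sub-slice is fixed (Lemma 2, parts (3)–(4)): let u, v ≥ 1, let n : BitVec v be fixed, let l, h : BitVec (u+v), and define, for β ∈ {l, h}, the bit-vector β_y : BitVec u by β_y.toNat = ⌈((β.toNat − n.toNat) mod 2^(u+v)) / 2^v⌉ mod 2^u. Then: (i) if l_y ≠ h_y, then for every y : BitVec u with y ++ n ∉ [l,h[ one has y ∉ [l_y, h_y[; (ii) if l_y = h_y and h_y ++ n ∈ [l,h[, then every y : BitVec u satisfies y ++ n ∈ [l,h[ (so the constraint x ∉ [l,h[ together with the fixed low slice n is unsatisfiable). -/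

import Mathlib

private lemma lexV {V a b ρ σ : ℕ} (hρ : ρ < V) (hσ : σ < V) :
    a * V + ρ < b * V + σ ↔ a < b ∨ (a = b ∧ ρ < σ) := by
  constructor
  · intro hlt
    rcases lt_trichotomy a b with h | h | h
    · exact Or.inl h
    · subst h; exact Or.inr ⟨rfl, Nat.lt_of_add_lt_add_left hlt⟩
    · exfalso
      have h1 : b + 1 ≤ a := h
      have h2 : (b + 1) * V ≤ a * V := Nat.mul_le_mul_right V h1
      nlinarith
  · rintro (h | ⟨rfl, h⟩)
    · have h1 : a + 1 ≤ b := h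
      have h2 : (a + 1) * V ≤ b * V := Nat.mul_le_mul_right V h1
      nlinarith
    · exact Nat.add_lt_add_left h _

private lemma mod_mulV {U V : ℕ} (hU : 0 < U) (hV : 0 < V) (k ρ : ℕ) (hρ : ρ < V) :
    (k * V + ρ) % (U * V) = (k % U) * V + ρ := by
  rw [Nat.add_mod, Nat.mul_mod_mul_right]
  have h1 : ρ % (U * V) = ρ :=
    Nat.mod_eq_of_lt (lt_of_lt_of_le hρ (Nat.le_mul_of_pos_left V hU))
  rw [h1]
  apply Nat.mod_eq_of_lt
  have h2 : k % U + 1 ≤ U := Nat.mod_lt k hU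
  calc k % U * V + ρ < k % U * V + V := Nat.add_lt_add_left hρ _
    _ = (k % U + 1) * V := by ring
    _ ≤ U * V := Nat.mul_le_mul_right V h2

private lemma ceil_div {V : ℕ} (hV : 0 < V) (a r : ℕ) (hr : r < V) :
    (a * V + r + (V - 1)) / V = a + (if r = 0 then 0 else 1) := by
  have h1 : a * V + r + (V - 1) = r + (V - 1) + a * V := by
    generalize a * V = A; omega
  rw [h1, Nat.add_mul_div_right _ _ hV, Nat.add_comm]
  congr 1
  by_cases h0 : r = 0
  · subst h0
    simp only [if_pos rfl, Nat.zero_add]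
    exact Nat.div_eq_of_lt (by omega)
  · simp only [if_neg h0]
    have h2 : r + (V - 1) = (r - 1) + 1 * V := by omega
    rw [h2, Nat.add_mul_div_right _ _ hV, Nat.div_eq_of_lt (by omega)]

private lemma sub_mod_helper {U : ℕ} (hU : 0 < U) {z : ℕ} (hz : z ≤ U) (x : ℕ) :
    (U - z % U + x) % U = (U + x - z) % U := by
  rcases eq_or_lt_of_le hz with h | h
  · subst h
    rw [Nat.mod_self, Nat.sub_zero, Nat.add_mod_left, Nat.add_sub_cancel_left]
  · rw [Nat.mod_eq_of_lt h]
    congr 1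
    omega

private lemma mod_shift2 {U : ℕ} (hU : 0 < U) {y z : ℕ} (hy : y ≤ U) (hz : z ≤ U) :
    (U + y % U - z) % U = (U + y - z) % U := by
  rcases eq_or_lt_of_le hy with h | h
  · rw [h, Nat.mod_self, Nat.add_zero]
    have h2 : U + U - z = (U - z) + U := by omega
    rw [h2, Nat.add_mod_right]
  · rw [Nat.mod_eq_of_lt h]

private lemma pred_mod {U z : ℕ} (hU : 0 < U) (hz : z % U ≠ 0) : (z - 1) % U = z % U - 1 := by
  have h1 : z % U < U := Nat.mod_lt _ hU
  have h2 : U * (z / U) + z % U = z := Nat.div_add_mod z U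
  have h3 : z - 1 = U * (z / U) + (z % U - 1) := by
    generalize U * (z / U) = A at h2 ⊢
    generalize z % U = B at hz h2 ⊢
    omega
  rw [h3, Nat.mul_add_mod]
  exact Nat.mod_eq_of_lt (Nat.lt_of_le_of_lt (Nat.sub_le _ _) h1)

private lemma pred_mod_zero {U z : ℕ} (hU : 0 < U) (h1 : 1 ≤ z) (hz : z % U = 0) :
    (z - 1) % U = U - 1 := by
  have h2 : U * (z / U) + z % U = z := Nat.div_add_mod z U
  rw [hz, Nat.add_zero] at h2
  have hq : 1 ≤ z / U := by
    rcases Nat.eq_zero_or_pos (z / U) with h | h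
    · rw [h, Nat.mul_zero] at h2; omega
    · exact h
  have h3 : z - 1 = U * (z / U - 1) + (U - 1) := by
    have h5 : U * (z / U - 1 + 1) = U * (z / U - 1) + U := Nat.mul_succ U _
    have h6 : z / U - 1 + 1 = z / U := by omega
    have h4 : U * (z / U - 1) + U = U * (z / U) := by rw [← h5, h6]
    generalize U * (z / U - 1) = A at h4 ⊢
    generalize U * (z / U) = B at h4 h2 ⊢
    omega
  rw [h3, Nat.mul_add_mod]
  exact Nat.mod_eq_of_lt (by omega)

private lemma eq_imp_zero {U x y : ℕ} (hU : 0 < U) (hx : x ≤ U) (hy : y ≤ U)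
    (h : x % U = y % U) : (U + y - x) % U = 0 := by
  rcases eq_or_lt_of_le hx with h1 | h1 <;> rcases eq_or_lt_of_le hy with h2 | h2
  · rw [h1, h2]
    have e : U + U - U = U := by omega
    rw [e, Nat.mod_self]
  · rw [h1, Nat.mod_self, Nat.mod_eq_of_lt h2] at h
    rw [h1, ← h]
    have e : U + 0 - U = 0 := by omega
    rw [e, Nat.zero_mod]
  · rw [h2, Nat.mod_self, Nat.mod_eq_of_lt h1] at h
    rw [h2, h]
    have e : U + U - 0 = U + U := by omega
    rw [e, Nat.add_mod_left, Nat.mod_self]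
  · rw [Nat.mod_eq_of_lt h1, Nat.mod_eq_of_lt h2] at h
    subst h
    have e : U + x - x = U := by omega
    rw [e, Nat.mod_self]
private lemma endgame1' {D E Q ρ σ : ℕ} (h1 : D < E) (h2 : Q = E - 1) (h3 : ρ < σ) :
    D < Q ∨ (D = Q ∧ ρ < σ) := by omega

private lemma le_aux {D E Q : ℕ} (h1 : D < E) (h2 : Q = E - 1) : D ≤ Q := by omega

private lemma endgameA {D Q V s : ℕ} (h1 : D ≤ Q) (hs : 0 < s) : D * V < Q * V + s :=
  lt_of_le_of_lt (Nat.mul_le_mul_right V h1) (Nat.lt_add_of_pos_right hs)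

private lemma endgameB {D U V s : ℕ} (hD : D < U) (hs : 0 < s) : D * V < (U - 1) * V + s :=
  endgameA (by omega) hs

private lemma endgame4 {D U V r s : ℕ} (hD : D < U) (h1 : 0 < s) (h2 : s < r) (h3 : r < V) :
    D < U - 1 ∨ (D = U - 1 ∧ V - r < V - (r - s)) := by omega

private lemma core (U V L H : ℕ) (hU : 0 < U) (hV : 0 < V)
    (hL : L < U * V) (hH : H < U * V) :
    (∀ Y, Y < U →
        (U - ((L + (V - 1)) / V) % U + Y) % U <
          (U - ((L + (V - 1)) / V) % U + ((H + (V - 1)) / V) % U) % U →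
        (U * V - L + Y * V) % (U * V) < (U * V - L + H) % (U * V)) ∧
    (((L + (V - 1)) / V) % U = ((H + (V - 1)) / V) % U →
      (U * V - L + ((H + (V - 1)) / V) % U * V) % (U * V) < (U * V - L + H) % (U * V) →
      ∀ Y, Y < U → (U * V - L + Y * V) % (U * V) < (U * V - L + H) % (U * V)) := by
  obtain ⟨a, r, ha, hr, rfl⟩ : ∃ a r, a < U ∧ r < V ∧ L = a * V + r :=
    ⟨L / V, L % V, by rw [Nat.div_lt_iff_lt_mul hV]; exact hL, Nat.mod_lt _ hV,
      (Nat.div_add_mod' L V).symm⟩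
  obtain ⟨b, s, hb, hs, rfl⟩ : ∃ b s, b < U ∧ s < V ∧ H = b * V + s :=
    ⟨H / V, H % V, by rw [Nat.div_lt_iff_lt_mul hV]; exact hH, Nat.mod_lt _ hV,
      (Nat.div_add_mod' H V).symm⟩
  rw [ceil_div hV a r hr, ceil_div hV b s hs]
  by_cases hr0 : r = 0 <;> by_cases hs0 : s = 0
  -- Branch A : r = 0, s = 0
  · subst hr0; subst hs0
    simp only [reduceIte, Nat.add_zero]
    have keyL : ∀ Y, (U * V - a * V + Y * V) % (U * V) = ((U + Y - a) % U) * V := by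
      intro Y
      have e1 : U * V - a * V + Y * V = (U - a + Y) * V := by rw [Nat.add_mul, Nat.sub_mul]
      have e2 : U - a + Y = U + Y - a := by omega
      rw [e1, Nat.mul_mod_mul_right, e2]
    constructor
    · intro Y hY hmemu
      rw [Nat.mod_eq_of_lt ha, Nat.mod_eq_of_lt hb] at hmemu
      have e3 : U - a + Y = U + Y - a := by omega
      have e4 : U - a + b = U + b - a := by omega
      rw [e3, e4] at hmemu
      rw [keyL Y, keyL b]
      exact Nat.mul_lt_mul_of_pos_right hmemu hV
    · intro heq hmem0 Y hY
      rw [keyL (b % U), keyL b, mod_shift2 hU (le_of_lt hb) (le_of_lt ha)] at hmem0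
      exact absurd hmem0 (lt_irrefl _)
  -- Branch B : r = 0, s > 0
  · subst hr0
    simp only [reduceIte, if_neg hs0, Nat.add_zero]
    have hs' : 0 < s := Nat.pos_of_ne_zero hs0
    have keyL : ∀ Y, (U * V - a * V + Y * V) % (U * V) = ((U + Y - a) % U) * V := by
      intro Y
      have e1 : U * V - a * V + Y * V = (U - a + Y) * V := by rw [Nat.add_mul, Nat.sub_mul]
      have e2 : U - a + Y = U + Y - a := by omega
      rw [e1, Nat.mul_mod_mul_right, e2]
    have keyR : (U * V - a * V + (b * V + s)) % (U * V) = ((U + b - a) % U) * V + s := by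
      have e1 : U * V - a * V + (b * V + s) = (U - a + b) * V + s := by
        zify [Nat.mul_le_mul_right V (le_of_lt ha), le_of_lt ha]
        ring
      have e2 : U - a + b = U + b - a := by omega
      rw [e1, mod_mulV hU hV _ _ hs, e2]
    constructor
    · intro Y hY hmemu
      rw [Nat.mod_eq_of_lt ha] at hmemu
      have eR : (U - a + (b + 1) % U) % U = (U + (b + 1) - a) % U := by
        rw [Nat.add_comm (U - a) ((b + 1) % U), Nat.mod_add_mod]
        congr 1
        omega
      rw [eR] at hmemu
      have e3 : U - a + Y = U + Y - a := by omega
      have e4 : U + (b + 1) - a = U + b - a + 1 := by omega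
      rw [e3, e4] at hmemu
      rw [keyL Y, keyR]
      have hne : (U + b - a + 1) % U ≠ 0 := (Nat.zero_lt_of_lt hmemu).ne'
      have hQ := pred_mod hU (z := U + b - a + 1) hne
      rw [Nat.add_sub_cancel] at hQ
      exact endgameA (le_aux hmemu hQ) hs'
    · intro heq hmem0 Y hY
      have hE0 : (U + (b + 1) - a) % U = 0 :=
        eq_imp_zero hU (le_of_lt ha) hb heq
      have e4 : U + (b + 1) - a = U + b - a + 1 := by omega
      rw [e4] at hE0
      have hQ := pred_mod_zero hU (by omega : 1 ≤ U + b - a + 1) hE0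
      rw [Nat.add_sub_cancel] at hQ
      rw [keyL Y, keyR, hQ]
      exact endgameB (Nat.mod_lt _ hU) hs'
  -- Branch C : r > 0, s = 0
  · subst hs0
    simp only [reduceIte, if_neg hr0, Nat.add_zero]
    have hr' : 0 < r := Nat.pos_of_ne_zero hr0
    have ha1 : a + 1 ≤ U := ha
    have keyL : ∀ Y, (U * V - (a * V + r) + Y * V) % (U * V)
        = ((U + Y - (a + 1)) % U) * V + (V - r) := by
      intro Y
      have e1 : U * V - (a * V + r) + Y * V = (U - (a + 1) + Y) * V + (V - r) := by
        zify [le_of_lt hL, ha1, le_of_lt hr]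
        ring
      have e2 : U - (a + 1) + Y = U + Y - (a + 1) := by omega
      rw [e1, mod_mulV hU hV _ _ (by omega : V - r < V), e2]
    constructor
    · intro Y hY hmemu
      rw [sub_mod_helper hU ha1 Y, sub_mod_helper hU ha1 (b % U),
        mod_shift2 hU (le_of_lt hb) ha1] at hmemu
      rw [keyL Y, keyL b]
      exact Nat.add_lt_add_right (Nat.mul_lt_mul_of_pos_right hmemu hV) _
    · intro heq hmem0 Y hY
      rw [keyL (b % U), keyL b, mod_shift2 hU (le_of_lt hb) ha1] at hmem0
      exact absurd hmem0 (lt_irrefl _)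
  -- Branches D/E : r > 0, s > 0
  · simp only [if_neg hr0, if_neg hs0]
    have hr' : 0 < r := Nat.pos_of_ne_zero hr0
    have hs' : 0 < s := Nat.pos_of_ne_zero hs0
    have ha1 : a + 1 ≤ U := ha
    have hb1 : b + 1 ≤ U := hb
    have keyL : ∀ Y, (U * V - (a * V + r) + Y * V) % (U * V)
        = ((U + Y - (a + 1)) % U) * V + (V - r) := by
      intro Y
      have e1 : U * V - (a * V + r) + Y * V = (U - (a + 1) + Y) * V + (V - r) := by
        zify [le_of_lt hL, ha1, le_of_lt hr]
        ring
      have e2 : U - (a + 1) + Y = U + Y - (a + 1) := by omega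
      rw [e1, mod_mulV hU hV _ _ (by omega : V - r < V), e2]
    rcases le_or_gt r s with hrs | hrs
    -- Branch D : r ≤ s
    · have keyR : (U * V - (a * V + r) + (b * V + s)) % (U * V)
          = ((U + b - a) % U) * V + (s - r) := by
        have e1 : U * V - (a * V + r) + (b * V + s) = (U - a + b) * V + (s - r) := by
          zify [le_of_lt hL, le_of_lt ha, hrs]
          ring
        have e2 : U - a + b = U + b - a := by omega
        rw [e1, mod_mulV hU hV _ _ (by omega : s - r < V), e2]
      constructor
      · intro Y hY hmemu
        rw [sub_mod_helper hU ha1 Y, sub_mod_helper hU ha1 ((b + 1) % U),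
          mod_shift2 hU hb1 ha1] at hmemu
        have e3 : U + (b + 1) - (a + 1) = U + b - a := by omega
        rw [e3] at hmemu
        rw [keyL Y, keyR, lexV (by omega : V - r < V) (by omega : s - r < V)]
        exact Or.inl hmemu
      · intro heq hmem0 Y hY
        have hE0 : (U + (b + 1) - (a + 1)) % U = 0 := eq_imp_zero hU ha1 hb1 heq
        have e3 : U + (b + 1) - (a + 1) = U + b - a := by omega
        rw [e3] at hE0
        rw [keyL ((b + 1) % U), keyR, mod_shift2 hU hb1 ha1, e3, hE0] at hmem0
        exact absurd hmem0 (by omega)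
    -- Branch E : s < r
    · have keyR : (U * V - (a * V + r) + (b * V + s)) % (U * V)
          = ((U + b - (a + 1)) % U) * V + (V - (r - s)) := by
        have e1 : U * V - (a * V + r) + (b * V + s)
            = (U - (a + 1) + b) * V + (V - (r - s)) := by
          zify [le_of_lt hL, ha1, le_of_lt hrs, show r - s ≤ V by omega]
          ring
        have e2 : U - (a + 1) + b = U + b - (a + 1) := by omega
        rw [e1, mod_mulV hU hV _ _ (by omega : V - (r - s) < V), e2]
      constructor
      · intro Y hY hmemu
        rw [sub_mod_helper hU ha1 Y, sub_mod_helper hU ha1 ((b + 1) % U),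
          mod_shift2 hU hb1 ha1] at hmemu
        have e3 : U + (b + 1) - (a + 1) = U + b - a := by omega
        rw [e3] at hmemu
        have hne : (U + b - a) % U ≠ 0 := (Nat.zero_lt_of_lt hmemu).ne'
        have hQ := pred_mod hU hne
        have e4 : U + b - (a + 1) = U + b - a - 1 := by omega
        rw [keyL Y, keyR, e4, lexV (by omega : V - r < V) (by omega : V - (r - s) < V)]
        exact endgame1' hmemu hQ (by omega)
      · intro heq hmem0 Y hY
        have hE0 : (U + (b + 1) - (a + 1)) % U = 0 := eq_imp_zero hU ha1 hb1 heq
        have e3 : U + (b + 1) - (a + 1) = U + b - a := by omega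
        rw [e3] at hE0
        have hQ := pred_mod_zero hU (by omega : 1 ≤ U + b - a) hE0
        have e4 : U + b - (a + 1) = U + b - a - 1 := by omega
        rw [keyL Y, keyR, e4, hQ, lexV (by omega : V - r < V) (by omega : V - (r - s) < V)]
        exact endgame4 (Nat.mod_lt _ hU) hs' hrs hr

/-- Membership in a wrapping half-open interval `[l, h[` over `BitVec w`. -/
def inInterval {w : ℕ} (t l h : BitVec w) : Prop := t - l < h - l

/-- `βy n β` has `toNat` value `⌈((β.toNat − n.toNat) mod 2^(u+v)) / 2^v⌉ mod 2^u`,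
where the difference is taken over the integers and `mod` is the nonnegative remainder. -/
def βy {u v : ℕ} (n : BitVec v) (β : BitVec (u + v)) : BitVec u :=
  BitVec.ofNat u
    ((((β.toNat + (2 ^ (u + v) - n.toNat)) % 2 ^ (u + v)) + (2 ^ v - 1)) / 2 ^ v)

/-- Projection of a forbidden interval when the low sub-slice is fixed to `n`. -/
theorem forbidden_interval_project_high_fixed_low (u v : ℕ) (hu : 1 ≤ u) (hv : 1 ≤ v)
    (n : BitVec v) (l h : BitVec (u + v)) :
    (βy (u := u) n l ≠ βy (u := u) n h →
      ∀ y : BitVec u, ¬ inInterval (y ++ n) l h →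
        ¬ inInterval y (βy (u := u) n l) (βy (u := u) n h)) ∧
    (βy (u := u) n l = βy (u := u) n h →
      inInterval (βy (u := u) n h ++ n) l h →
        ∀ y : BitVec u, inInterval (y ++ n) l h) := by
  set c : BitVec (u + v) := (0#u) ++ n with hc
  have hcn : c.toNat = n.toNat := by simp [hc]
  have hpow : (2:ℕ) ^ (u + v) = 2 ^ u * 2 ^ v := pow_add 2 u v
  have hβ : ∀ β : BitVec (u + v), (βy (u := u) n β).toNat
      = (((β - c).toNat + (2 ^ v - 1)) / 2 ^ v) % 2 ^ u := by
    intro β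
    simp only [βy, BitVec.toNat_ofNat, BitVec.toNat_sub, hcn]
    rw [Nat.add_comm β.toNat (2 ^ (u + v) - n.toNat)]
  have hmem : ∀ t : BitVec (u + v), inInterval t l h ↔
      (2 ^ u * 2 ^ v - (l - c).toNat + (t - c).toNat) % (2 ^ u * 2 ^ v)
        < (2 ^ u * 2 ^ v - (l - c).toNat + (h - c).toNat) % (2 ^ u * 2 ^ v) := by
    intro t
    have e1 : t - l = (t - c) - (l - c) := by ring
    have e2 : h - l = (h - c) - (l - c) := by ring
    simp only [inInterval]
    rw [e1, e2, BitVec.lt_def, BitVec.toNat_sub (t - c) (l - c), BitVec.toNat_sub (h - c) (l - c), hpow]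
  have hmemu : ∀ y ly hy : BitVec u, inInterval y ly hy ↔
      (2 ^ u - ly.toNat + y.toNat) % 2 ^ u < (2 ^ u - ly.toNat + hy.toNat) % 2 ^ u := by
    intro y ly hy
    simp only [inInterval]
    rw [BitVec.lt_def, BitVec.toNat_sub y ly, BitVec.toNat_sub hy ly]
  have happ : ∀ y : BitVec u, ((y ++ n) - c).toNat = y.toNat * 2 ^ v := by
    intro y
    rw [BitVec.toNat_sub, hcn, BitVec.toNat_append]
    have h1 : y.toNat <<< v ||| n.toNat = 2 ^ v * y.toNat + n.toNat := by
      rw [Nat.shiftLeft_eq, Nat.mul_comm]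
      exact (Nat.two_pow_add_eq_or_of_lt n.isLt y.toNat).symm
    rw [h1]
    have h3 : (2:ℕ) ^ v ≤ 2 ^ (u + v) := Nat.pow_le_pow_right (by norm_num) (by omega)
    have hyy : 2 ^ v * y.toNat < 2 ^ (u + v) := by
      rw [hpow, Nat.mul_comm (2 ^ u)]
      exact Nat.mul_lt_mul_of_pos_left y.isLt (by positivity)
    have h2 : 2 ^ (u + v) - n.toNat + (2 ^ v * y.toNat + n.toNat)
        = 2 ^ v * y.toNat + 2 ^ (u + v) := by
      have := n.isLt
      omega
    rw [h2, Nat.add_mod_right, Nat.mod_eq_of_lt hyy, Nat.mul_comm]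
  have hL' : (l - c).toNat < 2 ^ u * 2 ^ v := by
    have := (l - c).isLt; rwa [hpow] at this
  have hH' : (h - c).toNat < 2 ^ u * 2 ^ v := by
    have := (h - c).isLt; rwa [hpow] at this
  obtain ⟨C1, C2⟩ := core (2 ^ u) (2 ^ v) (l - c).toNat (h - c).toNat
    (by positivity) (by positivity) hL' hH'
  constructor
  · intro _hne y hnot hIn
    rw [hmemu y _ _, hβ l, hβ h] at hIn
    apply hnot
    rw [hmem (y ++ n), happ y]
    exact C1 y.toNat y.isLt hIn
  · intro heq hm0 y
    rw [hmem (y ++ n), happ y]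
    have heq' : (((l - c).toNat + (2 ^ v - 1)) / 2 ^ v) % 2 ^ u
        = (((h - c).toNat + (2 ^ v - 1)) / 2 ^ v) % 2 ^ u := by
      rw [← hβ l, ← hβ h, heq]
    rw [hmem _, happ (βy (u := u) n h), hβ h] at hm0
    exact C2 heq' hm0 y.toNat y.isLt
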